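/- For every real μ > 0, c > 0, v ≥ 0 and every complex s with Re s > −μ: ∫_0^∞ e^{-s (v + max(x − c v, 0))} μ e^{-μ x} dx = e^{-s v} − (s/(μ + s)) e^{-(s + μ c) v}. -/

import Mathlib

open MeasureTheory Set

lemma aux_hasDerivAt (z : ℂ) (hz : z ≠ 0) (x : ℝ) :
    HasDerivAt (fun y : ℝ => Complex.exp (-z * y) / (-z)) (Complex.exp (-z * x)) x := by
  rw [← mul_div_cancel_right₀ (Complex.exp (-z * x)) (neg_ne_zero.mpr hz)]
  apply ((Complex.hasDerivAt_exp _).comp x _).div_const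
  simpa only [mul_one, id_eq] using ((hasDerivAt_id (x : ℂ)).const_mul (-z)).comp_ofReal

lemma aux_integrableOn (z : ℂ) (hz : 0 < z.re) (b : ℝ) :
    IntegrableOn (fun x : ℝ => Complex.exp (-z * x)) (Ioi b) := by
  apply Integrable.mono' (g := fun x : ℝ => Real.exp (-z.re * x))
    (exp_neg_integrableOn_Ioi b hz)
  · exact (Complex.continuous_exp.comp
      (continuous_const.mul Complex.continuous_ofReal)).aestronglyMeasurable
  · filter_upwards with x
    rw [Complex.norm_exp]
    simp

lemma aux_integral_Ioi (z : ℂ) (hz : 0 < z.re) (b : ℝ) :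
    ∫ x in Ioi b, Complex.exp (-z * x) = Complex.exp (-z * b) / z := by
  have hz0 : z ≠ 0 := fun h => by simp [h] at hz
  have := integral_Ioi_of_hasDerivAt_of_tendsto'
    (f := fun y : ℝ => Complex.exp (-z * y) / (-z)) (f' := fun y : ℝ => Complex.exp (-z * y))
    (a := b) (m := 0) (fun x _ => aux_hasDerivAt z hz0 x) (aux_integrableOn z hz b) ?_
  · rw [this]; field_simp; ring
  · rw [tendsto_zero_iff_norm_tendsto_zero]
    have heq : (fun x : ℝ => ‖Complex.exp (-z * x) / (-z)‖) =
        fun x : ℝ => Real.exp (-z.re * x) / ‖z‖ := by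
      ext x
      rw [norm_div, norm_neg, Complex.norm_exp]
      simp
    rw [heq]
    have h1 : Filter.Tendsto (fun x : ℝ => Real.exp (-z.re * x)) Filter.atTop (nhds 0) := by
      apply Real.tendsto_exp_atBot.comp
      exact Filter.Tendsto.neg_mul_atTop (neg_neg_iff_pos.mpr hz |> fun h => by linarith)
        tendsto_const_nhds Filter.tendsto_id
    simpa using h1.div_const ‖z‖

theorem stmt_14 (μ c : ℝ) (hμ : 0 < μ) (hc : 0 < c) (v : ℝ) (hv : 0 ≤ v)
    (s : ℂ) (hs : -μ < s.re) :
    (∫ x in Set.Ioi (0:ℝ),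
        (Complex.exp (-s * (v + max (x - c * v) 0 : ℝ)) *
          (μ * Real.exp (-μ * x)) : ℂ))
      = Complex.exp (-s * v)
        - (s / ((μ : ℂ) + s)) * Complex.exp (-(s + (μ : ℂ) * (c : ℂ)) * v) := by
  set a : ℝ := c * v with ha
  have ha0 : 0 ≤ a := by positivity
  have hμ0 : (μ : ℂ) ≠ 0 := by exact_mod_cast hμ.ne'
  have hre : 0 < ((μ : ℂ) + s).re := by
    simp only [Complex.add_re, Complex.ofReal_re]; linarith
  have hμs : (μ : ℂ) + s ≠ 0 := fun h => by rw [h] at hre; simp at hre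
  set f : ℝ → ℂ := fun x => Complex.exp (-s * (v + max (x - c * v) 0 : ℝ)) *
    ((μ : ℂ) * (Real.exp (-μ * x) : ℝ)) with hf
  have hf1 : EqOn f (fun x : ℝ => Complex.exp (-s * v) * ((μ : ℂ) *
      Complex.exp (((-μ : ℝ) : ℂ) * x))) (Ioc 0 a) := by
    intro x hx
    have hmax : max (x - c * v) 0 = 0 := max_eq_right (by simp only [← ha] at *; linarith [hx.2])
    simp only [hf, hmax, add_zero, ← Complex.ofReal_exp]
    push_cast
    ring_nf
  have hf2 : EqOn f (fun x : ℝ => ((μ : ℂ) * Complex.exp (-s * (v - a))) *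
      Complex.exp (-((μ : ℂ) + s) * x)) (Ioi a) := by
    intro x hx
    have hxa : a ≤ x := le_of_lt hx
    have hmax : max (x - c * v) 0 = x - c * v := max_eq_left (by simp only [← ha] at *; linarith)
    have key : ∀ p q r : ℂ, Complex.exp p * (q * Complex.exp r) = q * Complex.exp (p + r) := by
      intro p q r; rw [Complex.exp_add]; ring
    simp only [hf, hmax, Complex.ofReal_exp, key, mul_assoc, ← Complex.exp_add]
    congr 2
    rw [ha]
    push_cast
    ring
  have hint1 : IntegrableOn f (Ioc 0 a) := by
    have hcont : Continuous f := by
      apply Continuous.mul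
      · exact Complex.continuous_exp.comp (continuous_const.mul
          (Complex.continuous_ofReal.comp (continuous_const.add
            ((continuous_id.sub continuous_const).max continuous_const))))
      · exact continuous_const.mul (Complex.continuous_ofReal.comp
          (Real.continuous_exp.comp (continuous_const.mul continuous_id)))
    exact hcont.integrableOn_Ioc
  have hint2 : IntegrableOn f (Ioi a) := by
    have h' : IntegrableOn (fun x : ℝ => ((μ : ℂ) * Complex.exp (-s * (v - a))) *
        Complex.exp (-((μ : ℂ) + s) * x)) (Ioi a) :=
      (aux_integrableOn ((μ : ℂ) + s) hre a).const_mul _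
    exact h'.congr_fun hf2.symm measurableSet_Ioi
  have hI1 : ∫ x in Ioc 0 a, f x = Complex.exp (-s * v) *
      (1 - Complex.exp (-(μ : ℂ) * a)) := by
    rw [setIntegral_congr_fun measurableSet_Ioc hf1, ← intervalIntegral.integral_of_le ha0,
      intervalIntegral.integral_const_mul, intervalIntegral.integral_const_mul,
      integral_exp_mul_complex (by exact_mod_cast hμ.ne' ∘ neg_eq_zero.mp : ((-μ : ℝ) : ℂ) ≠ 0)]
    push_cast
    field_simp [hμ0]
    simp only [mul_zero, neg_zero, Complex.exp_zero]; ring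
  have hI2 : ∫ x in Ioi a, f x = ((μ : ℂ) * Complex.exp (-s * (v - a))) *
      (Complex.exp (-((μ : ℂ) + s) * a) / ((μ : ℂ) + s)) := by
    rw [setIntegral_congr_fun measurableSet_Ioi hf2, integral_const_mul,
      aux_integral_Ioi _ hre]
  rw [show Set.Ioi (0:ℝ) = Ioc 0 a ∪ Ioi a from (Ioc_union_Ioi_eq_Ioi ha0).symm,
    setIntegral_union Ioc_disjoint_Ioi_same measurableSet_Ioi hint1 hint2, hI1, hI2]
  have e1 : Complex.exp (-s * (v - a)) * Complex.exp (-((μ : ℂ) + s) * a) =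
      Complex.exp (-s * v) * Complex.exp (-(μ : ℂ) * a) := by
    rw [← Complex.exp_add, ← Complex.exp_add]; congr 1; ring
  have e2 : Complex.exp (-(s + (μ : ℂ) * (c : ℂ)) * v) =
      Complex.exp (-s * v) * Complex.exp (-(μ : ℂ) * a) := by
    rw [← Complex.exp_add]; congr 1; push_cast [ha]; ring
  rw [e2, mul_div_assoc', mul_assoc, e1]
  field_simp
  ring
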